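/- arXiv:1404.1239 — 4 statements merged into one kernel-verified Lean document; each statement's English description precedes it below -/
import Mathlib

section
/- For a fixed subject network A and fixed η, there exists a finite threshold λ* ≥ 0 such that for all λ > λ*, any joint MAP estimate Ĝ^(1:K) satisfies: for every edge (k,l) ∈ A, Ĝ^(k) = Ĝ^(l). In particular, when subjects are coupled strongly enough, connected subjects receive identical DAG estimates. -/
/-- for λ above the threshold λ* = Σ_k (max s_k − min s_k),
any joint MAP estimate has identical DAGs for all pairs coupled by A. -/
theorem strong_coupling_forces_equality {G : Type*} [Fintype G] [Nonempty G] {K : ℕ}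
    (s : Fin K → G → ℝ) (d : G → G → ℝ)
    (hd0 : ∀ g, d g g = 0) (hd1 : ∀ g h : G, g ≠ h → 1 ≤ d g h)
    (A : Finset (Fin K × Fin K)) (lam : ℝ)
    (hlam : (∑ k, (Finset.univ.sup' Finset.univ_nonempty (s k) -
        Finset.univ.inf' Finset.univ_nonempty (s k))) < lam)
    (ghat : Fin K → G)
    (hmax : ∀ g : Fin K → G,
      (∑ k, s k (g k) - lam * ∑ p ∈ A, d (g p.1) (g p.2)) ≤
        (∑ k, s k (ghat k) - lam * ∑ p ∈ A, d (ghat p.1) (ghat p.2))) :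
    ∀ p ∈ A, ghat p.1 = ghat p.2 := by
  intro p hp
  by_contra hne
  have hdnn : ∀ g h : G, 0 ≤ d g h := by
    intro g h
    by_cases hgh : g = h
    · simp [hgh, hd0]
    · linarith [hd1 g h hgh]
  -- the penalty sum is at least 1
  have hS : (1 : ℝ) ≤ ∑ q ∈ A, d (ghat q.1) (ghat q.2) := by
    calc (1 : ℝ) ≤ d (ghat p.1) (ghat p.2) := hd1 _ _ hne
    _ ≤ ∑ q ∈ A, d (ghat q.1) (ghat q.2) :=
      Finset.single_le_sum (f := fun q => d (ghat q.1) (ghat q.2)) (fun q _ => hdnn _ _) hp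
  -- compare with a constant assignment
  obtain ⟨c⟩ := ‹Nonempty G›
  have hconst := hmax (fun _ => c)
  simp only [hd0, Finset.sum_const, smul_zero, mul_zero, sub_zero] at hconst
  have hinf : ∀ k, Finset.univ.inf' Finset.univ_nonempty (s k) ≤ s k c :=
    fun k => Finset.inf'_le _ (Finset.mem_univ c)
  have hsup : ∀ k, s k (ghat k) ≤ Finset.univ.sup' Finset.univ_nonempty (s k) :=
    fun k => Finset.le_sup' _ (Finset.mem_univ _)
  have h1 : ∑ k, Finset.univ.inf' Finset.univ_nonempty (s k) ≤ ∑ k, s k c :=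
    Finset.sum_le_sum fun k _ => hinf k
  have h2 : ∑ k, s k (ghat k) ≤ ∑ k, Finset.univ.sup' Finset.univ_nonempty (s k) :=
    Finset.sum_le_sum fun k _ => hsup k
  have hlamnn : 0 ≤ lam := by
    have : (0:ℝ) ≤ ∑ k, (Finset.univ.sup' Finset.univ_nonempty (s k) -
        Finset.univ.inf' Finset.univ_nonempty (s k)) :=
      Finset.sum_nonneg fun k _ => by linarith [hinf k, Finset.le_sup' (s k) (Finset.mem_univ c)]
    linarith
  have hmul : lam * 1 ≤ lam * ∑ q ∈ A, d (ghat q.1) (ghat q.2) :=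
    mul_le_mul_of_nonneg_left hS hlamnn
  rw [Finset.sum_sub_distrib] at hlam
  linarith
end

section
/- Non-monotonicity of edge inclusion in λ for the joint MAP over two subjects: there exist parent-set scores on a two-variable, two-subject system coupled by the network A = {(1,2)} such that the edge 1→2 is present in the MAP estimate Ĝ^(1) for all λ ∈ [0,1), absent for all λ ∈ (1,2), and present again for all λ > 2. Hence the indicator of edge inclusion in the MAP estimate is not a monotone function of the regularity parameter λ. -/
/-- The three DAGs on two variables: empty, edge 1→2, edge 2→1. -/
inductive Dag2 : Type
  | empty : Dag2
  | e12 : Dag2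
  | e21 : Dag2
  deriving DecidableEq

/-- Subject 1 scores: s¹(1,∅)=0, s¹(1,{2})=−3, s¹(2,∅)=0, s¹(2,{1})=1. -/
def score1 : Dag2 → ℝ
  | .empty => 0
  | .e12 => 1
  | .e21 => -3

/-- Subject 2 scores: s²(1,∅)=0, s²(1,{2})=4, s²(2,∅)=0, s²(2,{1})=1. -/
def score2 : Dag2 → ℝ
  | .empty => 0
  | .e12 => 1
  | .e21 => 4

/-- Structural Hamming distance between the three DAGs. -/
def shd2 : Dag2 → Dag2 → ℝ
  | .empty, .empty => 0
  | .e12, .e12 => 0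
  | .e21, .e21 => 0
  | .empty, _ => 1
  | _, .empty => 1
  | _, _ => 2

/-- Joint objective for the two-subject system coupled by A = {(1,2)}. -/
def F4 (lam : ℝ) (p : Dag2 × Dag2) : ℝ :=
  score1 p.1 + score2 p.2 - lam * shd2 p.1 p.2

/-- non-monotonicity of edge inclusion in λ. The edge 1→2 is present
in Ĝ¹ for λ ∈ [0,1), absent for λ ∈ (1,2), present again for λ > 2 (unique maximizers). -/
theorem nonmonotone_edge_in_lambda (lam : ℝ) :
    (0 ≤ lam → lam < 1 → ∀ p : Dag2 × Dag2, p ≠ (Dag2.e12, Dag2.e21) →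
      F4 lam p < F4 lam (Dag2.e12, Dag2.e21)) ∧
    (1 < lam → lam < 2 → ∀ p : Dag2 × Dag2, p ≠ (Dag2.empty, Dag2.e21) →
      F4 lam p < F4 lam (Dag2.empty, Dag2.e21)) ∧
    (2 < lam → ∀ p : Dag2 × Dag2, p ≠ (Dag2.e12, Dag2.e12) →
      F4 lam p < F4 lam (Dag2.e12, Dag2.e12)) := by
  refine ⟨fun h0 h1 p hp => ?_, fun h1 h2 p hp => ?_, fun h2 p hp => ?_⟩ <;>
    rcases p with ⟨a, b⟩ <;> rcases a <;> rcases b <;>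
    simp_all [F4, score1, score2, shd2] <;> linarith
end

section
/- For λ exceeding the threshold λ* = Σ_k (max_g s_k(g) − min_g s_k(g)) and a connected network A on K subjects, every joint MAP estimate assigns the same DAG to all K subjects, and that common DAG maximizes the pooled score Σ_k s_k(g) over g ∈ G. -/
/-- for λ above λ* = Σ_k (max s_k − min s_k) and a connected network A,
every joint MAP estimate is constant across subjects and the common DAG maximizes
the pooled score Σ_k s_k. -/
theorem strong_coupling_connected_pooled {G : Type*} [Fintype G] [Nonempty G] {K : ℕ}
    (hK : 0 < K) (s : Fin K → G → ℝ) (d : G → G → ℝ)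
    (hd0 : ∀ g, d g g = 0) (hd1 : ∀ g h : G, g ≠ h → 1 ≤ d g h)
    (A : Finset (Fin K × Fin K))
    (hconn : ∀ k l : Fin K,
      Relation.ReflTransGen (fun a b => (a, b) ∈ A ∨ (b, a) ∈ A) k l)
    (lam : ℝ)
    (hlam : (∑ k, (Finset.univ.sup' Finset.univ_nonempty (s k) -
        Finset.univ.inf' Finset.univ_nonempty (s k))) < lam)
    (ghat : Fin K → G)
    (hmax : ∀ g : Fin K → G,
      (∑ k, s k (g k) - lam * ∑ p ∈ A, d (g p.1) (g p.2)) ≤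
        (∑ k, s k (ghat k) - lam * ∑ p ∈ A, d (ghat p.1) (ghat p.2))) :
    (∀ k l : Fin K, ghat k = ghat l) ∧
    (∀ (h' : G) (k0 : Fin K), ∑ k, s k h' ≤ ∑ k, s k (ghat k0)) := by
  have hd_nonneg : ∀ g h : G, 0 ≤ d g h := by
    intro g h
    by_cases hgh : g = h
    · simp [hgh, hd0]
    · linarith [hd1 g h hgh]
  have hedge : (∀ p ∈ A, ghat p.1 = ghat p.2) → ∀ k l : Fin K, ghat k = ghat l := by
    intro hA k l
    induction hconn k l with
    | refl => rfl
    | tail _ hbc ih =>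
      rcases hbc with h1 | h2
      · exact ih.trans (hA _ h1)
      · exact ih.trans (hA _ h2).symm
  have hconst : ∀ k l : Fin K, ghat k = ghat l := by
    by_contra hnc
    have hne : ∃ p ∈ A, ghat p.1 ≠ ghat p.2 := by
      by_contra h
      push_neg at h
      exact hnc (hedge h)
    obtain ⟨p, hpA, hpne⟩ := hne
    have hpen : (1 : ℝ) ≤ ∑ p ∈ A, d (ghat p.1) (ghat p.2) := by
      calc (1 : ℝ) ≤ d (ghat p.1) (ghat p.2) := hd1 _ _ hpne
        _ ≤ ∑ p ∈ A, d (ghat p.1) (ghat p.2) :=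
          Finset.single_le_sum (f := fun q => d (ghat q.1) (ghat q.2))
            (fun q _ => hd_nonneg _ _) hpA
    obtain ⟨g0⟩ := (inferInstance : Nonempty G)
    have h1 := hmax (fun _ => g0)
    simp only [hd0, Finset.sum_const, smul_zero, mul_zero, sub_zero] at h1
    have h2 : ∑ k, s k (ghat k) ≤ ∑ k, Finset.univ.sup' Finset.univ_nonempty (s k) :=
      Finset.sum_le_sum fun k _ => Finset.le_sup' (s k) (Finset.mem_univ _)
    have h3 : ∑ k, Finset.univ.inf' Finset.univ_nonempty (s k) ≤ ∑ k, s k g0 :=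
      Finset.sum_le_sum fun k _ => Finset.inf'_le (s k) (Finset.mem_univ _)
    rw [Finset.sum_sub_distrib] at hlam
    have hlam0 : (0:ℝ) ≤ lam := by
      have : (0:ℝ) ≤ ∑ k, (Finset.univ.sup' Finset.univ_nonempty (s k) -
          Finset.univ.inf' Finset.univ_nonempty (s k)) :=
        Finset.sum_nonneg fun k _ => sub_nonneg.2 <|
          (Finset.inf'_le (s k) (Finset.mem_univ (Classical.arbitrary G))).trans
            (Finset.le_sup' (s k) (Finset.mem_univ (Classical.arbitrary G)))
      rw [Finset.sum_sub_distrib] at this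
      linarith
    have hlam1 : lam ≤ lam * ∑ p ∈ A, d (ghat p.1) (ghat p.2) := by
      nlinarith
    linarith
  have hpen0 : ∑ p ∈ A, d (ghat p.1) (ghat p.2) = 0 :=
    Finset.sum_eq_zero fun q _ => by rw [hconst q.1 q.2, hd0]
  refine ⟨hconst, fun h' k0 => ?_⟩
  have h1 := hmax (fun _ => h')
  simp only [hd0, hpen0, Finset.sum_const, smul_zero, mul_zero, sub_zero] at h1
  calc ∑ k, s k h' ≤ ∑ k, s k (ghat k) := h1
    _ = ∑ k, s k (ghat k0) := Finset.sum_congr rfl fun k _ => by rw [hconst k k0]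
end

section
/- The profiled objective over DAG tuples after optimizing out the network A is V(g) = Σ_k s_k(g k) + Σ_{k<l} max(0, η − λ·d(g k, g l)), and hence joint maximization of F(g,A) over (g,A) is equivalent to maximization of V over g alone: (ĝ, Â) maximizes F if and only if ĝ maximizes V and Â includes all pairs with η − λ d(ĝ k, ĝ l) > 0 and no pairs with η − λ d(ĝ k, ĝ l) < 0. -/
/-- profiling out the network A: (ĝ, Â) maximizes F(g,A) over valid
networks iff ĝ maximizes V(g) = Σ_k s_k(g k) + Σ_{k<l} max(0, η − λ d(g k, g l)) and
Â includes every pair with strictly positive gain and no pair with strictly negative gain. -/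
theorem profiled_objective_equivalence {G : Type*} [Fintype G] [Nonempty G] [DecidableEq G]
    {K : ℕ} (s : Fin K → G → ℝ) (d : G → G → ℝ) (lam eta : ℝ)
    (ghat : Fin K → G) (Ahat : Finset (Fin K × Fin K))
    (hAhat : ∀ p ∈ Ahat, p.1 < p.2) :
    (∀ (g : Fin K → G) (A : Finset (Fin K × Fin K)), (∀ p ∈ A, p.1 < p.2) →
        (∑ k, s k (g k) + ∑ p ∈ A, (eta - lam * d (g p.1) (g p.2))) ≤
          (∑ k, s k (ghat k) + ∑ p ∈ Ahat, (eta - lam * d (ghat p.1) (ghat p.2)))) ↔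
      ((∀ g : Fin K → G,
          (∑ k, s k (g k) + ∑ p ∈ Finset.univ.filter (fun p : Fin K × Fin K => p.1 < p.2),
            max 0 (eta - lam * d (g p.1) (g p.2))) ≤
          (∑ k, s k (ghat k) + ∑ p ∈ Finset.univ.filter (fun p : Fin K × Fin K => p.1 < p.2),
            max 0 (eta - lam * d (ghat p.1) (ghat p.2)))) ∧
        (∀ k l : Fin K, k < l →
          (0 < eta - lam * d (ghat k) (ghat l) → (k, l) ∈ Ahat) ∧
          (eta - lam * d (ghat k) (ghat l) < 0 → (k, l) ∉ Ahat))) := by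
  classical
  set P : Finset (Fin K × Fin K) := Finset.univ.filter (fun p : Fin K × Fin K => p.1 < p.2)
    with hP
  have key : ∀ (g : Fin K → G) (A : Finset (Fin K × Fin K)), (∀ p ∈ A, p.1 < p.2) →
      ∑ p ∈ A, (eta - lam * d (g p.1) (g p.2)) ≤
        ∑ p ∈ P, max 0 (eta - lam * d (g p.1) (g p.2)) := by
    intro g A hA
    have hsub : A ⊆ P := fun p hp => Finset.mem_filter.mpr ⟨Finset.mem_univ _, hA p hp⟩
    calc ∑ p ∈ A, (eta - lam * d (g p.1) (g p.2))
        ≤ ∑ p ∈ A, max 0 (eta - lam * d (g p.1) (g p.2)) :=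
          Finset.sum_le_sum fun p _ => le_max_right _ _
      _ ≤ ∑ p ∈ P, max 0 (eta - lam * d (g p.1) (g p.2)) :=
          Finset.sum_le_sum_of_subset_of_nonneg hsub (fun p _ _ => le_max_left _ _)
  constructor
  · intro hmax
    have pairc : ∀ k l : Fin K, k < l →
        (0 < eta - lam * d (ghat k) (ghat l) → (k, l) ∈ Ahat) ∧
        (eta - lam * d (ghat k) (ghat l) < 0 → (k, l) ∉ Ahat) := by
      intro k l hkl
      constructor
      · intro hpos
        by_contra hnot
        have h := hmax ghat (insert (k,l) Ahat) ?_
        · rw [Finset.sum_insert hnot] at h; linarith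
        · intro p hp
          rcases Finset.mem_insert.mp hp with h | h
          · subst h; exact hkl
          · exact hAhat p h
      · intro hneg hin
        have h := hmax ghat (Ahat.erase (k,l))
          (fun p hp => hAhat p (Finset.mem_of_mem_erase hp))
        rw [Finset.sum_erase_eq_sub hin] at h; linarith
    refine ⟨?_, pairc⟩
    intro g
    set Ag := P.filter (fun p => 0 < eta - lam * d (g p.1) (g p.2)) with hAg
    have hAgv : ∀ p ∈ Ag, p.1 < p.2 := fun p hp =>
      (Finset.mem_filter.mp (Finset.mem_filter.mp hp).1).2
    have heq : ∑ p ∈ P, max 0 (eta - lam * d (g p.1) (g p.2)) =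
        ∑ p ∈ Ag, (eta - lam * d (g p.1) (g p.2)) := by
      conv_rhs => rw [hAg, Finset.sum_filter]
      apply Finset.sum_congr rfl
      intro p _
      by_cases h : 0 < eta - lam * d (g p.1) (g p.2)
      · simp [h, max_eq_right h.le]
      · simp [h, max_eq_left (not_lt.mp h)]
    have h1 := hmax g Ag hAgv
    have h2 := key ghat Ahat hAhat
    rw [heq]
    linarith
  · rintro ⟨hV, hpairs⟩ g A hA
    have hsub : Ahat ⊆ P := fun p hp => Finset.mem_filter.mpr ⟨Finset.mem_univ _, hAhat p hp⟩
    have hEq : ∑ p ∈ P, max 0 (eta - lam * d (ghat p.1) (ghat p.2)) =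
        ∑ p ∈ Ahat, (eta - lam * d (ghat p.1) (ghat p.2)) := by
      rw [← Finset.sum_subset hsub]
      · apply Finset.sum_congr rfl
        intro p hp
        have hlt := hAhat p hp
        have hnn : 0 ≤ eta - lam * d (ghat p.1) (ghat p.2) := by
          by_contra hneg
          exact ((hpairs p.1 p.2 hlt).2 (not_le.mp hneg)) (by simpa using hp)
        exact max_eq_right hnn
      · intro p hp hnot
        have hlt : p.1 < p.2 := (Finset.mem_filter.mp hp).2
        have : ¬ (0 < eta - lam * d (ghat p.1) (ghat p.2)) := by
          intro hpos
          exact hnot (by simpa using (hpairs p.1 p.2 hlt).1 hpos)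
        exact max_eq_left (not_lt.mp this)
    have h1 := key g A hA
    have h2 := hV g
    linarith
end
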